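/- Let G be a Hilbert space and U a unitary operator on G. Define Λ = {((1+U)g, i(1−U)g) : g ∈ G} ⊆ G ⊕ G and Π = {(g₁, g₂) ∈ G ⊕ G : i(1−U)g₁ = (1+U)g₂}. Then Λ is a closed subspace of G ⊕ G and Λ = Π. -/
import Mathlib


open Complex

/-- For a unitary U on a Hilbert space G, the graph-type subspace
Λ = {((1+U)g, i(1−U)g)} is closed and equals Π = {(g₁,g₂) : i(1−U)g₁ = (1+U)g₂}. -/
theorem lambda_closed_and_eq_pi {G : Type*} [NormedAddCommGroup G]
    [InnerProductSpace ℂ G] [CompleteSpace G] (U : G ≃ₗᵢ[ℂ] G) :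
    IsClosed (Set.range (fun g : G => ((g + U g, Complex.I • (g - U g)) : G × G))) ∧
    Set.range (fun g : G => ((g + U g, Complex.I • (g - U g)) : G × G)) =
      {p : G × G | Complex.I • (p.1 - U p.1) = p.2 + U p.2} := by
  have heq : Set.range (fun g : G => ((g + U g, Complex.I • (g - U g)) : G × G)) =
      {p : G × G | Complex.I • (p.1 - U p.1) = p.2 + U p.2} := by
    ext p
    constructor
    · rintro ⟨g, rfl⟩
      simp only [Set.mem_setOf_eq, map_add, map_sub, map_smul]
      module
    · intro h
      simp only [Set.mem_setOf_eq] at h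
      refine ⟨(2:ℂ)⁻¹ • (p.1 - Complex.I • p.2), ?_⟩
      have hU : U p.2 = Complex.I • p.1 - Complex.I • U p.1 - p.2 := by
        rw [smul_sub] at h
        exact eq_sub_of_add_eq' h.symm
      have hII : Complex.I • Complex.I • p.1 = -p.1 := by
        rw [smul_smul, Complex.I_mul_I, neg_one_smul]
      have hII2 : Complex.I • Complex.I • U p.1 = -U p.1 := by
        rw [smul_smul, Complex.I_mul_I, neg_one_smul]
      ext
      · simp only [map_smul, map_sub, map_smul, hU]
        match_scalars <;> simp [Complex.ext_iff] <;> ring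
      · simp only [map_smul, map_sub, map_smul, hU]
        match_scalars <;> simp [Complex.ext_iff] <;> ring
  refine ⟨?_, heq⟩
  rw [heq]
  have : {p : G × G | Complex.I • (p.1 - U p.1) = p.2 + U p.2} =
      {p : G × G | Complex.I • (p.1 - U p.1) - (p.2 + U p.2) = 0} := by
    ext p; simp [sub_eq_zero]
  rw [this]
  apply isClosed_eq
  · exact ((continuous_fst.sub (U.continuous.comp continuous_fst)).const_smul _).sub
      (continuous_snd.add (U.continuous.comp continuous_snd))
  · exact continuous_const
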